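/- (Smoothness of each fiber at its marked point; step in the proof of Lemma 4.8.) Let s ∈ 𝕜⁷ (with coordinates x₀, x₁, x₂, b₀, b₁, c₀, c₁) satisfy L₁(s) = 0 and Δ(s) = 0, and suppose π(s) ≠ 0, (x₀(s), x₁(s)) ≠ (0,0), and (∂_{x₀}Δ(s), ∂_{x₁}Δ(s)) ≠ (0,0) (i.e. the image of s in ℙ² is not a singular point of the curve Δ_X). Then (∂_{x₀}Ψ(s), ∂_{x₁}Ψ(s)) ≠ (0,0); in particular, the plane curve cut out by Ψ (with the b- and c-coordinates of s fixed) is smooth at the point of ℙ² determined by s. -/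

import Mathlib

open MvPolynomial Finset

noncomputable section

variable (𝕜 : Type*) [Field 𝕜]

/-- `L₀ = c₀x₀ − b₀x₁` in `R = 𝕜[x₀,x₁,x₂,b₀,b₁,c₀,c₁]`, where the variables
`x₀,x₁,x₂,b₀,b₁,c₀,c₁` are `X 0, X 1, X 2, X 3, X 4, X 5, X 6` respectively. -/
def L0 : MvPolynomial (Fin 7) 𝕜 := X 5 * X 0 - X 3 * X 1

/-- `L₁ = c₁x₀ − b₁x₁`. -/
def L1 : MvPolynomial (Fin 7) 𝕜 := X 6 * X 0 - X 4 * X 1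

/-- `π = b₁c₀ − b₀c₁`. -/
def piPoly : MvPolynomial (Fin 7) 𝕜 := X 4 * X 5 - X 3 * X 6

/-- `Δ = σ(x₀,x₁) − x₂^p` where `σ(A,B) = ∑_{i=1}^{p-1} σ_i A^i B^{p-i}`. -/
def Delta (p : ℕ) (s : ℕ → 𝕜) : MvPolynomial (Fin 7) 𝕜 :=
  (∑ i ∈ Ioo 0 p, C (s i) * X 0 ^ i * X 1 ^ (p - i)) - X 2 ^ p

/-- `𝓛 = L₀^m + ∑_{k=1}^{m-1} e_k L₀^{m-k} L₁^k`. -/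
def calL (m : ℕ) (e : ℕ → 𝕜) : MvPolynomial (Fin 7) 𝕜 :=
  L0 𝕜 ^ m + ∑ k ∈ Ioo 0 m, C (e k) * L0 𝕜 ^ (m - k) * L1 𝕜 ^ k

/-- `Ψ = L₁^d − (−1)^d π^p Δ 𝓛` with `d = m + p`. -/
def Psi (p m : ℕ) (s e : ℕ → 𝕜) : MvPolynomial (Fin 7) 𝕜 :=
  L1 𝕜 ^ (m + p) - C ((-1 : 𝕜) ^ (m + p)) * piPoly 𝕜 ^ p * Delta 𝕜 p s * calL 𝕜 m e

/-- **smoothness of each fiber at its marked point; Lemma 4.8.**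
Let `s ∈ 𝕜⁷` satisfy `L₁(s) = 0` and `Δ(s) = 0`, with `π(s) ≠ 0`,
`(x₀(s), x₁(s)) ≠ (0,0)` and `(∂_{x₀}Δ(s), ∂_{x₁}Δ(s)) ≠ (0,0)`.
Then `(∂_{x₀}Ψ(s), ∂_{x₁}Ψ(s)) ≠ (0,0)`; in particular the plane curve cut out by `Ψ`
(with the `b`- and `c`-coordinates of `s` fixed) is smooth at the point of `ℙ²`
determined by `s`. -/
theorem fiber_smooth_at_marked_point
    (p : ℕ) (hp : p.Prime) [CharP 𝕜 p] (m : ℕ) (s e : ℕ → 𝕜)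
    (v : Fin 7 → 𝕜)
    (hL₁ : eval v (L1 𝕜) = 0)
    (hΔ : eval v (Delta 𝕜 p s) = 0)
    (hπ : eval v (piPoly 𝕜) ≠ 0)
    (hstr : ¬ (v 0 = 0 ∧ v 1 = 0))
    (hΔsm : ¬ (eval v (pderiv (0 : Fin 7) (Delta 𝕜 p s)) = 0 ∧
               eval v (pderiv (1 : Fin 7) (Delta 𝕜 p s)) = 0)) :
    ¬ (eval v (pderiv (0 : Fin 7) (Psi 𝕜 p m s e)) = 0 ∧
       eval v (pderiv (1 : Fin 7) (Psi 𝕜 p m s e)) = 0) := by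
  have hL0 : eval v (L0 𝕜) ^ m ≠ 0 := by
    rcases Nat.eq_zero_or_pos m with hm | hm
    · simp [hm]
    refine pow_ne_zero _ fun h0 => ?_
    apply hstr
    have e0 : v 5 * v 0 - v 3 * v 1 = 0 := by simpa [L0] using h0
    have e1 : v 6 * v 0 - v 4 * v 1 = 0 := by simpa [L1] using hL₁
    have epi : v 4 * v 5 - v 3 * v 6 ≠ 0 := by simpa [piPoly] using hπ
    constructor
    · have h : (v 4 * v 5 - v 3 * v 6) * v 0 = 0 := by linear_combination v 4 * e0 - v 3 * e1
      exact (mul_eq_zero.1 h).resolve_left epi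
    · have h : (v 4 * v 5 - v 3 * v 6) * v 1 = 0 := by linear_combination v 6 * e0 - v 5 * e1
      exact (mul_eq_zero.1 h).resolve_left epi
  have hcal : eval v (calL 𝕜 m e) = eval v (L0 𝕜) ^ m := by
    simp only [calL, map_add, map_sum, map_mul, map_pow, hL₁, eval_C]
    rw [Finset.sum_eq_zero, add_zero]
    intro k hk
    rw [zero_pow (by simp only [mem_Ioo] at hk; omega), mul_zero]
  have hd : m + p - 1 ≠ 0 := by have := hp.two_le; omega
  have key : ∀ i : Fin 7, eval v (pderiv i (Psi 𝕜 p m s e)) =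
      (-((-1:𝕜)^(m+p) * eval v (piPoly 𝕜) ^ p * eval v (L0 𝕜) ^ m)) *
        eval v (pderiv i (Delta 𝕜 p s)) := by
    intro i
    simp only [Psi, map_sub, pderiv_mul, pderiv_pow, pderiv_C, map_mul, map_add,
      map_natCast, map_pow, eval_C, hL₁, hΔ, hcal, zero_pow hd]
    ring
  have hc : -((-1:𝕜)^(m+p) * eval v (piPoly 𝕜) ^ p * eval v (L0 𝕜) ^ m) ≠ 0 := by
    simp only [neg_ne_zero]
    exact mul_ne_zero (mul_ne_zero (pow_ne_zero _ (by norm_num)) (pow_ne_zero _ hπ)) hL0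
  rintro ⟨h0, h1⟩
  apply hΔsm
  refine ⟨?_, ?_⟩
  · have h := (key 0).symm.trans h0
    exact (mul_eq_zero.1 h).resolve_left hc
  · have h := (key 1).symm.trans h1
    exact (mul_eq_zero.1 h).resolve_left hc

end
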